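/- Let q > 0, q ≠ 1, n ≥ 1. Then the q-difference equation x² D_{q,x}² y + 2(x+1) D_{q,x} y − [n]_q([n−1]_q + 2) y = 0 admits a polynomial solution of degree n with a_0 = 1, a_1 = [n]_q([n−1]_q+2)/2, a_2 = (([n]_q([n−1]_q+2) − 1)² − 1)/(4[2]_q) (interpreting λ = [n]_q([n−1]_q+2)), and a_ν = a_2 ∏_{j=2}^{ν−1} ( (λ − [j]_q([j−1]_q+2)) / (2[j+1]_q) ) for ν ≥ 3. -/

import Mathlib

open PowerSeries Finset

/-- The `q`-number `[j]_q = (1 - q^j)/(1 - q)`. -/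
noncomputable def qnum (q : ℝ) (j : ℕ) : ℝ := (1 - q ^ j) / (1 - q)

/-- The Jackson `q`-derivative on formal power series, `D_q (x^p) = [p]_q x^{p-1}`. -/
noncomputable def qDeriv (q : ℝ) (f : PowerSeries ℂ) : PowerSeries ℂ :=
  PowerSeries.mk fun p => ((qnum q (p + 1) : ℝ) : ℂ) * PowerSeries.coeff (R := ℂ) (p + 1) f

noncomputable def qmu (q : ℝ) (j : ℕ) : ℝ := qnum q j * (qnum q (j - 1) + 2)

noncomputable def acoef (q lam : ℝ) : ℕ → ℝ
  | 0 => 1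
  | p + 1 => acoef q lam p * ((lam - qmu q p) / (2 * qnum q (p + 1)))

lemma qnum_geom {q : ℝ} (hq1 : q ≠ 1) (j : ℕ) :
    qnum q j = ∑ i ∈ Finset.range j, q ^ i := by
  rw [geom_sum_eq hq1, qnum]
  have h1 : (1 : ℝ) - q ≠ 0 := sub_ne_zero.2 (fun h => hq1 h.symm)
  have h2 : q - 1 ≠ 0 := sub_ne_zero.2 hq1
  field_simp
  ring

lemma qnum_zero (q : ℝ) : qnum q 0 = 0 := by simp [qnum]

lemma qnum_one {q : ℝ} (hq1 : q ≠ 1) : qnum q 1 = 1 := by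
  simp [qnum, div_self (sub_ne_zero.2 (fun h => hq1 h.symm))]

lemma qnum_pos {q : ℝ} (hq : 0 < q) (hq1 : q ≠ 1) {j : ℕ} (hj : 1 ≤ j) :
    0 < qnum q j := by
  rw [qnum_geom hq1]
  apply Finset.sum_pos (fun i _ => pow_pos hq i)
  exact Finset.nonempty_range_iff.2 (by omega)

lemma qnum_nonneg {q : ℝ} (hq : 0 < q) (hq1 : q ≠ 1) (j : ℕ) : 0 ≤ qnum q j := by
  rcases Nat.eq_zero_or_pos j with h | h
  · simp [h, qnum_zero]
  · exact (qnum_pos hq hq1 h).le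

lemma qnum_mono {q : ℝ} (hq : 0 < q) (hq1 : q ≠ 1) {j k : ℕ} (h : j ≤ k) :
    qnum q j ≤ qnum q k := by
  rw [qnum_geom hq1, qnum_geom hq1]
  exact Finset.sum_le_sum_of_subset_of_nonneg (Finset.range_subset_range.2 h)
    (fun i _ _ => (pow_pos hq i).le)

lemma qnum_strictMono {q : ℝ} (hq : 0 < q) (hq1 : q ≠ 1) {j k : ℕ} (h : j < k) :
    qnum q j < qnum q k := by
  rw [qnum_geom hq1, qnum_geom hq1]
  apply Finset.sum_lt_sum_of_subset (Finset.range_subset_range.2 h.le)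
    (Finset.mem_range.2 h) (by simp) (pow_pos hq j) (fun i _ _ => (pow_pos hq i).le)

lemma qmu_lt {q : ℝ} (hq : 0 < q) (hq1 : q ≠ 1) {j k : ℕ} (h : j < k) :
    qmu q j < qmu q k := by
  have h1 := qnum_nonneg hq hq1 j
  have h2 := qnum_strictMono hq hq1 h
  have h3 : qnum q (j - 1) ≤ qnum q (k - 1) := qnum_mono hq hq1 (by omega)
  have h4 := qnum_nonneg hq hq1 (j - 1)
  unfold qmu
  nlinarith

lemma acoef_rec {q : ℝ} (hq : 0 < q) (hq1 : q ≠ 1) (lam : ℝ) (p : ℕ) :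
    2 * qnum q (p + 1) * acoef q lam (p + 1) = (lam - qmu q p) * acoef q lam p := by
  have hne : 2 * qnum q (p + 1) ≠ 0 := by
    have := qnum_pos hq hq1 (j := p + 1) (by omega); positivity
  rw [show acoef q lam (p+1) = acoef q lam p * ((lam - qmu q p) / (2 * qnum q (p + 1))) from rfl]
  have hne2 : qnum q (p + 1) ≠ 0 := by intro h; apply hne; rw [h, mul_zero]
  field_simp

/-- The `q`-Bessel equation `x² D_q² y + 2(x+1) D_q y - [n]_q([n-1]_q + 2) y = 0` admits a
polynomial solution of degree `n` with the stated coefficients. -/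
theorem stmt16 (q : ℝ) (hq : 0 < q) (hq1 : q ≠ 1) (n : ℕ) (hn : 1 ≤ n) :
    ∃ a : ℕ → ℝ,
      a 0 = 1 ∧
      a 1 = qnum q n * (qnum q (n - 1) + 2) / 2 ∧
      a 2 = ((qnum q n * (qnum q (n - 1) + 2) - 1) ^ 2 - 1) / (4 * qnum q 2) ∧
      (∀ ν, 3 ≤ ν → a ν = a 2 *
        ∏ j ∈ Finset.Icc 2 (ν - 1),
          ((qnum q n * (qnum q (n - 1) + 2) - qnum q j * (qnum q (j - 1) + 2)) /
            (2 * qnum q (j + 1)))) ∧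
      (X : PowerSeries ℂ) ^ 2 * qDeriv q (qDeriv q (PowerSeries.mk fun p => ((a p : ℝ) : ℂ)))
        + 2 * ((X : PowerSeries ℂ) + 1) * qDeriv q (PowerSeries.mk fun p => ((a p : ℝ) : ℂ))
        - C (R := ℂ) ((qnum q n * (qnum q (n - 1) + 2) : ℝ) : ℂ) *
            (PowerSeries.mk fun p => ((a p : ℝ) : ℂ)) = 0 ∧
      (∀ p, n < p → a p = 0) ∧ a n ≠ 0 := by
  set lam : ℝ := qnum q n * (qnum q (n - 1) + 2) with hlam
  have hlammu : lam = qmu q n := rfl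
  refine ⟨acoef q lam, rfl, ?_, ?_, ?_, ?_, ?_, ?_⟩
  · -- a 1
    show (1 : ℝ) * ((lam - qmu q 0) / (2 * qnum q 1)) = lam / 2
    rw [qnum_one hq1]
    simp [qmu, qnum_zero]
  · -- a 2
    have h2 : qnum q 2 ≠ 0 := (qnum_pos hq hq1 (by norm_num)).ne'
    show acoef q lam 1 * ((lam - qmu q 1) / (2 * qnum q 2)) = ((lam - 1) ^ 2 - 1) / (4 * qnum q 2)
    have ha1 : acoef q lam 1 = lam / 2 := by
      show (1 : ℝ) * ((lam - qmu q 0) / (2 * qnum q 1)) = lam / 2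
      rw [qnum_one hq1]; simp [qmu, qnum_zero]
    have hmu1 : qmu q 1 = 2 := by simp [qmu, qnum_one hq1, qnum_zero]
    rw [ha1, hmu1]
    field_simp
    ring
  · -- product formula
    intro ν hν
    induction ν with
    | zero => omega
    | succ m ih =>
      rcases eq_or_lt_of_le hν with h | h
      · -- m + 1 = 3
        have hm : m = 2 := by omega
        subst hm
        show acoef q lam 2 * ((lam - qmu q 2) / (2 * qnum q 3)) = _
        simp [qmu]
      · have hm3 : 3 ≤ m := by omega
        have := ih hm3
        show acoef q lam m * ((lam - qmu q m) / (2 * qnum q (m + 1))) = _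
        rw [this]
        have : m + 1 - 1 = (m - 1) + 1 := by omega
        rw [this, Finset.prod_Icc_succ_top (by omega)]
        have : m - 1 + 1 = m := by omega
        rw [this]
        unfold qmu
        ring
  · -- the equation
    ext p
    have hcoeffB : ∀ m : ℕ, (PowerSeries.coeff (R := ℂ) m)
        (qDeriv q (PowerSeries.mk fun p => ((acoef q lam p : ℝ) : ℂ)))
        = ((qnum q (m + 1) : ℝ) : ℂ) * ((acoef q lam (m + 1) : ℝ) : ℂ) := by
      intro m; simp [qDeriv]
    have hcoeffA : ∀ m : ℕ, (PowerSeries.coeff (R := ℂ) m)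
        (qDeriv q (qDeriv q (PowerSeries.mk fun p => ((acoef q lam p : ℝ) : ℂ))))
        = ((qnum q (m + 1) : ℝ) : ℂ) * (((qnum q (m + 2) : ℝ) : ℂ) *
            ((acoef q lam (m + 2) : ℝ) : ℂ)) := by
      intro m; simp [qDeriv]
    have key : ∀ p : ℕ,
        (qnum q p * qnum q (p - 1) + 2 * qnum q p - qmu q p) * acoef q lam p = 0 := by
      intro p
      rcases Nat.eq_zero_or_pos p with h | h
      · simp [h, qnum_zero, qmu]
      · have : qmu q p = qnum q p * (qnum q (p - 1) + 2) := rfl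
        rw [this]; ring_nf
    have hrec := acoef_rec hq hq1 lam
    have hR : ∀ p : ℕ, qnum q (p - 1) * qnum q p * acoef q lam p
        + 2 * (qnum q p * acoef q lam p + qnum q (p + 1) * acoef q lam (p + 1))
        - lam * acoef q lam p = 0 := by
      intro p
      linear_combination hrec p + key p
    have hC : ∀ p : ℕ, ((qnum q (p - 1) : ℝ) : ℂ) * ((qnum q p : ℝ) : ℂ)
          * ((acoef q lam p : ℝ) : ℂ)
        + 2 * (((qnum q p : ℝ) : ℂ) * ((acoef q lam p : ℝ) : ℂ)
          + ((qnum q (p + 1) : ℝ) : ℂ) * ((acoef q lam (p + 1) : ℝ) : ℂ))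
        - ((lam : ℝ) : ℂ) * ((acoef q lam p : ℝ) : ℂ) = 0 := by
      intro p; exact_mod_cast hR p
    rw [map_sub, map_add, mul_comm ((X : PowerSeries ℂ) ^ 2),
      PowerSeries.coeff_mul_X_pow', map_zero]
    have hexp : (2 : PowerSeries ℂ) * ((X : PowerSeries ℂ) + 1) *
        qDeriv q (PowerSeries.mk fun p => ((acoef q lam p : ℝ) : ℂ))
        = C (R := ℂ) 2 * (qDeriv q (PowerSeries.mk fun p => ((acoef q lam p : ℝ) : ℂ)) * X ^ 1
          + qDeriv q (PowerSeries.mk fun p => ((acoef q lam p : ℝ) : ℂ))) := by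
      rw [map_ofNat (C (R := ℂ)) 2]; ring
    rw [hexp, PowerSeries.coeff_C_mul, map_add, PowerSeries.coeff_mul_X_pow',
      PowerSeries.coeff_C_mul, PowerSeries.coeff_mk]
    have z0 : ((qnum q 0 : ℝ) : ℂ) = 0 := by rw [qnum_zero]; norm_num
    match p with
    | 0 =>
      rw [if_neg (by norm_num : ¬ (2 : ℕ) ≤ 0), if_neg (by norm_num : ¬ (1 : ℕ) ≤ 0),
        hcoeffB 0]
      have h := hC 0
      linear_combination h - (((qnum q (0 - 1) : ℝ) : ℂ) * ((acoef q lam 0 : ℝ) : ℂ)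
        + 2 * ((acoef q lam 0 : ℝ) : ℂ)) * z0
    | 1 =>
      rw [if_neg (by norm_num : ¬ (2 : ℕ) ≤ 1), if_pos (by norm_num : (1 : ℕ) ≤ 1),
        show (1 : ℕ) - 1 = 0 from rfl, hcoeffB 0, hcoeffB 1]
      have h := hC 1
      rw [show (1 : ℕ) - 1 = 0 from rfl] at h
      linear_combination h - (((qnum q 1 : ℝ) : ℂ) * ((acoef q lam 1 : ℝ) : ℂ)) * z0
    | (m + 2) =>
      rw [if_pos (by omega : 2 ≤ m + 2), if_pos (by omega : 1 ≤ m + 2),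
        show m + 2 - 2 = m from rfl, show m + 2 - 1 = m + 1 from rfl,
        hcoeffA m, hcoeffB (m + 1), hcoeffB (m + 2)]
      have h := hC (m + 2)
      rw [show m + 2 - 1 = m + 1 from rfl] at h
      linear_combination h
  · -- vanishing
    intro p hp
    induction p with
    | zero => omega
    | succ m ih =>
      rcases Nat.lt_or_ge n m with h | h
      · show acoef q lam m * _ = 0
        rw [ih h, zero_mul]
      · have hm : m = n := by omega
        subst hm
        show acoef q lam m * ((lam - qmu q m) / (2 * qnum q (m + 1))) = 0
        rw [hlammu, sub_self, zero_div, mul_zero]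
  · -- a n ≠ 0
    have hpos : ∀ p, p ≤ n → 0 < acoef q lam p := by
      intro p hp
      induction p with
      | zero => exact one_pos
      | succ m ih =>
        have hm : m ≤ n := by omega
        have h1 := ih hm
        show 0 < acoef q lam m * ((lam - qmu q m) / (2 * qnum q (m + 1)))
        have h2 : 0 < lam - qmu q m := by
          rw [hlammu]
          have := qmu_lt hq hq1 (show m < n by omega)
          linarith
        have h3 : 0 < qnum q (m + 1) := qnum_pos hq hq1 (by omega)
        positivity
    exact (hpos n le_rfl).ne'
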